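/- Let m > n > 0 be integers with gcd(m,n) = 1. The number of lattice points (i,j) ∈ ℤ² strictly below the line segment from (0,0) to (m+n, m) and on or above the lower boundary of the parallelogram with slopes 0 then 1 (i.e., points with 0 ≤ j, j ≤ i, i ≤ j+n, strictly below the segment of slope m/(m+n)) is (m−1)(n−1)/2 + (m+n−1) = mn − (m−1)(n−1)/2. -/

import Mathlib

open Finset

private lemma ediv_reflect (m n k : ℤ) (hn : 0 < n) (hcop : IsCoprime m n)
    (hk1 : 0 < k) (hk2 : k < n) :
    (k * m - 1) / n + ((n - k) * m - 1) / n = m - 1 := by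
  have hnd : ¬ (n ∣ k * m) := by
    intro h
    have hdk : n ∣ k := hcop.symm.dvd_of_dvd_mul_right h
    have := Int.le_of_dvd hk1 hdk
    omega
  set q := (k * m - 1) / n with hq
  set r := (k * m - 1) % n with hr
  have h1 : n * q + r = k * m - 1 := Int.mul_ediv_add_emod _ _
  have hr0 : 0 ≤ r := Int.emod_nonneg _ (by omega)
  have hrn : r < n := Int.emod_lt_of_pos _ hn
  have hrne : r ≠ n - 1 := by
    intro h
    exact hnd ⟨q + 1, by linarith⟩
  have h2 : (n - k) * m - 1 = (n - r - 2) + n * (m - q - 1) := by linear_combination h1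
  rw [h2, Int.add_mul_ediv_left _ _ (ne_of_gt hn),
    Int.ediv_eq_zero_of_lt (by omega) (by omega)]
  omega

/-- Count of lattice points `(i,j)` with `0 ≤ j`, `j ≤ i`, `i ≤ j + n`,
lying strictly below the segment from `(0,0)` to `(m+n, m)`
(i.e. `j(m+n) < im`), for coprime integers `m > n > 0`:
it equals `(m−1)(n−1)/2 + (m+n−1)`. -/
theorem lattice_point_count_below_segment
    (m n : ℤ) (hn : 0 < n) (hmn : n < m) (hcop : IsCoprime m n) :
    (({q : ℤ × ℤ | 0 ≤ q.2 ∧ q.2 ≤ q.1 ∧ q.1 ≤ q.2 + n ∧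
        q.2 * (m + n) < q.1 * m} : Set (ℤ × ℤ)).ncard : ℤ)
      = (m - 1) * (n - 1) / 2 + (m + n - 1) := by
  classical
  have hm : 0 < m := hn.trans hmn
  set F : Finset (ℤ × ℤ) :=
    (Finset.Icc 0 (m + n - 1) ×ˢ Finset.Icc 0 (m - 1)).filter
      (fun q => 0 ≤ q.2 ∧ q.2 ≤ q.1 ∧ q.1 ≤ q.2 + n ∧ q.2 * (m + n) < q.1 * m) with hFdef
  have hmemF : ∀ q : ℤ × ℤ, q ∈ F ↔
      (0 ≤ q.2 ∧ q.2 ≤ q.1 ∧ q.1 ≤ q.2 + n ∧ q.2 * (m + n) < q.1 * m) := by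
    rintro ⟨i, j⟩
    simp only [hFdef, Finset.mem_filter, Finset.mem_product, Finset.mem_Icc]
    constructor
    · rintro ⟨-, h⟩; exact h
    · rintro ⟨h0, h1, h2, h3⟩
      have him : i * m ≤ (j + n) * m := mul_le_mul_of_nonneg_right h2 hm.le
      have hjm : j < m := by nlinarith
      exact ⟨⟨⟨by omega, by omega⟩, by omega, by omega⟩, h0, h1, h2, h3⟩
  have hset : {q : ℤ × ℤ | 0 ≤ q.2 ∧ q.2 ≤ q.1 ∧ q.1 ≤ q.2 + n ∧
      q.2 * (m + n) < q.1 * m} = ↑F := by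
    ext q
    simp only [Set.mem_setOf_eq, Finset.mem_coe, hmemF]
  rw [hset, Set.ncard_coe_finset]
  -- fiberwise count over k = i - j
  have hmapsto : ∀ q ∈ F, q.1 - q.2 ∈ Finset.Icc (0 : ℤ) n := by
    intro q hq
    rw [hmemF] at hq
    simp only [Finset.mem_Icc]
    omega
  have hcard2 : F.card = ∑ k ∈ Finset.Icc (0 : ℤ) n,
      (F.filter (fun q => q.1 - q.2 = k)).card :=
    Finset.card_eq_sum_card_fiberwise hmapsto
  have hfiber : ∀ k ∈ Finset.Icc (0 : ℤ) n,
      (F.filter (fun q => q.1 - q.2 = k)).card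
        = (Finset.Icc (0 : ℤ) ((k * m - 1) / n)).card := by
    intro k hk
    simp only [Finset.mem_Icc] at hk
    apply Finset.card_nbij' (fun q => q.2) (fun j => (j + k, j))
    · intro q hq
      simp only [Finset.mem_coe, Finset.mem_filter, hmemF] at hq
      obtain ⟨⟨h0, h1, h2, h3⟩, hk'⟩ := hq
      simp only [Finset.mem_coe, Finset.mem_Icc]
      refine ⟨h0, ?_⟩
      rw [Int.le_ediv_iff_mul_le hn]
      have e : q.1 = q.2 + k := by omega
      rw [e] at h3
      nlinarith
    · intro j hj
      simp only [Finset.mem_coe, Finset.mem_Icc] at hj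
      have hjn : j * n ≤ k * m - 1 := (Int.le_ediv_iff_mul_le hn).mp hj.2
      have hkm : k * m ≤ n * m := mul_le_mul_of_nonneg_right hk.2 hm.le
      have hjm : j < m := by nlinarith
      simp only [Finset.mem_coe, Finset.mem_filter, hmemF]
      refine ⟨⟨hj.1, by omega, by omega, ?_⟩, by omega⟩
      nlinarith
    · intro q hq
      simp only [Finset.mem_coe, Finset.mem_filter] at hq
      have : q.2 + (q.1 - q.2) = q.1 := by ring
      rw [Prod.ext_iff]
      exact ⟨by dsimp only; omega, rfl⟩
    · intro j hj
      simp
  have hsum1 : F.card = ∑ k ∈ Finset.Icc (0 : ℤ) n, ((k * m - 1) / n + 1).toNat := by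
    rw [hcard2]
    refine Finset.sum_congr rfl fun k hk => ?_
    rw [hfiber k hk, Int.card_Icc, sub_zero]
  have hpos : ∀ k ∈ Finset.Icc (0 : ℤ) n, 0 ≤ (k * m - 1) / n + 1 := by
    intro k hk
    simp only [Finset.mem_Icc] at hk
    have : (-1 : ℤ) ≤ (k * m - 1) / n := by
      rw [Int.le_ediv_iff_mul_le hn]
      nlinarith
    omega
  have hcast : (F.card : ℤ) = ∑ k ∈ Finset.Icc (0 : ℤ) n, ((k * m - 1) / n + 1) := by
    rw [hsum1]
    push_cast
    exact Finset.sum_congr rfl fun k hk => Int.toNat_of_nonneg (hpos k hk)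
  rw [hcast]
  -- split the sum
  have hsplit : Finset.Icc (0 : ℤ) n = insert 0 (insert n (Finset.Icc 1 (n - 1))) := by
    ext x
    simp only [Finset.mem_insert, Finset.mem_Icc]
    omega
  have h0notin : (0 : ℤ) ∉ insert n (Finset.Icc 1 (n - 1)) := by
    simp only [Finset.mem_insert, Finset.mem_Icc]
    omega
  have hnnotin : n ∉ Finset.Icc (1 : ℤ) (n - 1) := by
    simp only [Finset.mem_Icc]
    omega
  rw [hsplit, Finset.sum_insert h0notin, Finset.sum_insert hnnotin]
  have hdiv0 : ((0 : ℤ) * m - 1) / n + 1 = 0 := by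
    have e : (0 : ℤ) * m - 1 = (n - 1) + n * (-1) := by ring
    rw [e, Int.add_mul_ediv_left _ _ (ne_of_gt hn),
      Int.ediv_eq_zero_of_lt (by omega) (by omega)]
    ring
  have hdivn : (n * m - 1) / n + 1 = m := by
    have e : n * m - 1 = (n - 1) + n * (m - 1) := by ring
    rw [e, Int.add_mul_ediv_left _ _ (ne_of_gt hn),
      Int.ediv_eq_zero_of_lt (by omega) (by omega)]
    ring
  rw [hdiv0, hdivn]
  -- the middle sum
  set S2 : ℤ := ∑ k ∈ Finset.Icc (1 : ℤ) (n - 1), (k * m - 1) / n with hS2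
  have hrefl : ∑ k ∈ Finset.Icc (1 : ℤ) (n - 1), ((n - k) * m - 1) / n = S2 := by
    rw [hS2]
    apply Finset.sum_nbij' (fun k => n - k) (fun k => n - k)
    · intro a ha; simp only [Finset.mem_Icc] at ha ⊢; omega
    · intro a ha; simp only [Finset.mem_Icc] at ha ⊢; omega
    · intro a _; ring
    · intro a _; ring
    · intro a _; ring_nf
  have h2S2 : 2 * S2 = (n - 1) * (m - 1) := by
    have hsum : S2 + S2
        = ∑ k ∈ Finset.Icc (1 : ℤ) (n - 1), ((k * m - 1) / n + ((n - k) * m - 1) / n) := by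
      rw [Finset.sum_add_distrib, hrefl]
    have hconst : ∑ k ∈ Finset.Icc (1 : ℤ) (n - 1),
        ((k * m - 1) / n + ((n - k) * m - 1) / n)
        = ∑ _k ∈ Finset.Icc (1 : ℤ) (n - 1), (m - 1) := by
      refine Finset.sum_congr rfl fun k hk => ?_
      simp only [Finset.mem_Icc] at hk
      exact ediv_reflect m n k hn hcop (by omega) (by omega)
    have hcardI : ((Finset.Icc (1 : ℤ) (n - 1)).card : ℤ) = n - 1 := by
      rw [Int.card_Icc]
      omega
    rw [two_mul, hsum, hconst, Finset.sum_const, nsmul_eq_mul, hcardI]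
  have hmid : ∑ k ∈ Finset.Icc (1 : ℤ) (n - 1), ((k * m - 1) / n + 1) = S2 + (n - 1) := by
    rw [Finset.sum_add_distrib, ← hS2, Finset.sum_const, nsmul_eq_mul, mul_one]
    congr 1
    rw [Int.card_Icc]
    omega
  rw [hmid]
  have hfin : (m - 1) * (n - 1) / 2 = S2 := by
    have : (m - 1) * (n - 1) = 2 * S2 := by rw [mul_comm]; exact h2S2.symm
    rw [this]
    exact Int.mul_ediv_cancel_left S2 two_ne_zero
  rw [hfin]
  ring
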